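/- Under the power network setup below, let x : [0, T] → ℝ^{4n} be a differentiable solution of ẋ = F(x), and write x(t) = (φ(t), ω(t), b(t), P_g(t), λ(t)). Then for all t ∈ [0, T]: (d/dt) V(x(t)) = −ω(t)ᵀA ω(t) − (1/σ²)(b(t) − b̄)ᵀQ^{-1}(b(t) − b̄) − (ρ/σ²)(1ᵀ(P_g(t) − P̄_g))². In particular, t ↦ V(x(t)) is nonincreasing. -/

import Mathlib

open Matrix Finset

/-- Index set for the state `x = (φ, ω, b, P_g, λ)` of the interconnected
bidding/power-network dynamics. -/
abbrev StIdx (n : ℕ) := Fin (n - 1) ⊕ (Fin n ⊕ (Fin n ⊕ (Fin n ⊕ Fin 1)))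

/-- State space `ℝ^{n−1} × ℝ^n × ℝ^n × ℝ^n × ℝ` with the Euclidean norm. -/
abbrev St (n : ℕ) := EuclideanSpace ℝ (StIdx n)

/-- Voltage phase angle differences component `φ`. -/
def phiOf {n : ℕ} (x : St n) : Fin (n - 1) → ℝ := fun i => x (Sum.inl i)
/-- Frequency deviation component `ω`. -/
def omgOf {n : ℕ} (x : St n) : Fin n → ℝ := fun i => x (Sum.inr (Sum.inl i))
/-- Bid component `b`. -/
def bidOf {n : ℕ} (x : St n) : Fin n → ℝ := fun i => x (Sum.inr (Sum.inr (Sum.inl i)))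
/-- Power generation component `P_g`. -/
def pgOf {n : ℕ} (x : St n) : Fin n → ℝ :=
  fun i => x (Sum.inr (Sum.inr (Sum.inr (Sum.inl i))))
/-- Shadow price component `λ`. -/
def lamOf {n : ℕ} (x : St n) : ℝ := x (Sum.inr (Sum.inr (Sum.inr (Sum.inr 0))))

/-- Assemble a state from its five components. -/
noncomputable def mkSt {n : ℕ} (φ : Fin (n - 1) → ℝ) (ω b Pg : Fin n → ℝ) (ℓ : ℝ) : St n :=
  (WithLp.equiv 2 _).symm (Sum.elim φ (Sum.elim ω (Sum.elim b (Sum.elim Pg fun _ => ℓ))))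

/-- Data of the power network and of the bidding dynamics: incidence matrices
`D` (graph) and `Dt` (spanning tree), line coefficients `Γ = diag γ`, diagonal
entries of the inertia matrix `M`, damping `A`, cost curvature `Q`, gains
`K_b`, `K_g`, `K_λ`, parameters `ρ, σ`, loads `P_d` and linear costs `c`. -/
structure NetData (n m : ℕ) where
  D : Matrix (Fin n) (Fin m) ℝ
  Dt : Matrix (Fin n) (Fin (n - 1)) ℝ
  γ : Fin m → ℝ
  M : Fin n → ℝ
  A : Fin n → ℝ
  Q : Fin n → ℝ
  Kb : Fin n → ℝ
  Kg : Fin n → ℝ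
  Klam : ℝ
  ρ : ℝ
  σ : ℝ
  Pd : Fin n → ℝ
  c : Fin n → ℝ

/-- The Moore–Penrose inverse `D_t^† = (D_tᵀD_t)⁻¹D_tᵀ` of the spanning tree
incidence matrix. -/
noncomputable def Ddag {n m : ℕ} (d : NetData n m) : Matrix (Fin (n - 1)) (Fin n) ℝ :=
  (d.Dtᵀ * d.Dt)⁻¹ * d.Dtᵀ

/-- The matrix `E = Dᵀ D_t^{†T}`, so that `Eφ` is the vector of angle
differences along the edges. -/
noncomputable def Emat {n m : ℕ} (d : NetData n m) : Matrix (Fin m) (Fin (n - 1)) ℝ :=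
  d.Dᵀ * (Ddag d)ᵀ

/-- The potential `U(φ) = −1ᵀΓcos(Eφ)` stored in the transmission lines. -/
noncomputable def Upot {n m : ℕ} (d : NetData n m) (φ : Fin (n - 1) → ℝ) : ℝ :=
  -∑ k, d.γ k * Real.cos ((Emat d).mulVec φ k)

/-- The gradient `∇U(φ) = EᵀΓsin(Eφ)` of the potential `U`. -/
noncomputable def gradU {n m : ℕ} (d : NetData n m) (φ : Fin (n - 1) → ℝ) :
    Fin (n - 1) → ℝ :=
  (Emat d)ᵀ.mulVec fun k => d.γ k * Real.sin ((Emat d).mulVec φ k)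

/-- The closed-loop vector field `F` of the interconnection of the power
network dynamics with the continuous-time bid and power-setpoint update
scheme:  `φ̇ = D_tᵀω`, `Mω̇ = −D_t∇U(φ) − Aω + P_g − P_d`,
`K_b ḃ = P_g − Q⁻¹b + Q⁻¹c`,
`K_g Ṗ_g = 1λ − b + ρ11ᵀ(P_d − P_g) − σ²ω`, `K_λ λ̇ = 1ᵀ(P_d − P_g)`. -/
noncomputable def Fvec {n m : ℕ} (d : NetData n m) (x : St n) : St n :=
  mkSt (d.Dtᵀ.mulVec (omgOf x))
    (fun i => (d.M i)⁻¹ *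
      (-(d.Dt.mulVec (gradU d (phiOf x))) i - d.A i * omgOf x i + pgOf x i - d.Pd i))
    (fun i => (d.Kb i)⁻¹ * (pgOf x i - (d.Q i)⁻¹ * bidOf x i + (d.Q i)⁻¹ * d.c i))
    (fun i => (d.Kg i)⁻¹ *
      (lamOf x - bidOf x i + d.ρ * (∑ j, (d.Pd j - pgOf x j)) - d.σ ^ 2 * omgOf x i))
    (d.Klam⁻¹ * ∑ j, (d.Pd j - pgOf x j))

/-- The energy function
`V(x) = U(φ) − (φ−φ̄)ᵀ∇U(φ̄) − U(φ̄) + ½ωᵀMω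
+ (1/2σ²)(‖b−b̄‖²_{K_b} + ‖P_g−P̄_g‖²_{K_g} + K_λ(λ−λ̄)²)`. -/
noncomputable def Vfun {n m : ℕ} (d : NetData n m) (xb : St n) (x : St n) : ℝ :=
  Upot d (phiOf x) - (∑ i, (phiOf x i - phiOf xb i) * gradU d (phiOf xb) i)
    - Upot d (phiOf xb)
    + (1 / 2) * ∑ i, d.M i * (omgOf x i) ^ 2
    + (1 / (2 * d.σ ^ 2)) *
        ((∑ i, d.Kb i * (bidOf x i - bidOf xb i) ^ 2)
          + (∑ i, d.Kg i * (pgOf x i - pgOf xb i) ^ 2)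
          + d.Klam * (lamOf x - lamOf xb) ^ 2)

/-- The LISS-Lyapunov candidate
`W_ε(x) = V(x) + ε₀ε₁(φ−φ̄)ᵀD_t^†Mω − (ε₀ε₂/σ²)(b−b̄)ᵀK_g(P_g−P̄_g)
− (ε₀ε₃/σ²)(λ−λ̄)1ᵀK_g(P_g−P̄_g)`. -/
noncomputable def Wfun {n m : ℕ} (d : NetData n m) (xb : St n)
    (ε₀ ε₁ ε₂ ε₃ : ℝ) (x : St n) : ℝ :=
  Vfun d xb x
    + ε₀ * ε₁ * ∑ i, (phiOf x i - phiOf xb i)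
        * ((Ddag d * Matrix.diagonal d.M).mulVec (omgOf x) i)
    - (ε₀ * ε₂ / d.σ ^ 2) * ∑ i, (bidOf x i - bidOf xb i) * (d.Kg i * (pgOf x i - pgOf xb i))
    - (ε₀ * ε₃ / d.σ ^ 2) * (lamOf x - lamOf xb) * ∑ i, d.Kg i * (pgOf x i - pgOf xb i)

/-- The region `Ω = {x : E φ ∈ [−γ, γ]^m}`. -/
def OmSet {n m : ℕ} (d : NetData n m) (γ : ℝ) : Set (St n) :=
  {x | ∀ k, (Emat d).mulVec (phiOf x) k ∈ Set.Icc (-γ) γ}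


section AuxLemmas

variable {n m : ℕ}

private lemma sum_swap_Dt (d : NetData n m) (w : Fin n → ℝ) (g : Fin (n - 1) → ℝ) :
    ∑ i, d.Dtᵀ.mulVec w i * g i = ∑ j, w j * d.Dt.mulVec g j := by
  simp only [Matrix.mulVec, dotProduct, Matrix.transpose_apply, Finset.sum_mul,
    Finset.mul_sum]
  rw [Finset.sum_comm]
  exact Finset.sum_congr rfl fun j _ => Finset.sum_congr rfl fun i _ => by ring

end AuxLemmas

/-- Dissipation identity for the energy function along solutions of the
interconnected dynamics `ẋ = F(x)`:
`(d/dt)V(x(t)) = −ωᵀAω − (1/σ²)(b − b̄)ᵀQ⁻¹(b − b̄) − (ρ/σ²)(1ᵀ(P_g − P̄_g))²`;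
in particular `t ↦ V(x(t))` is nonincreasing. -/
theorem energy_dissipation_along_solutions
    (n m : ℕ) (hn : 2 ≤ n) (hm : 1 ≤ m)
    (d : NetData n m)
    (hD1 : Matrix.vecMul (fun _ => (1 : ℝ)) d.D = 0)
    (hDrank : d.D.rank = n - 1)
    (hDt1 : Matrix.vecMul (fun _ => (1 : ℝ)) d.Dt = 0)
    (hDtrank : d.Dt.rank = n - 1)
    (hγ : ∀ k, 0 < d.γ k) (hM : ∀ i, 0 < d.M i) (hA : ∀ i, 0 < d.A i)
    (hQ : ∀ i, 0 < d.Q i) (hKb : ∀ i, 0 < d.Kb i) (hKg : ∀ i, 0 < d.Kg i)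
    (hKlam : 0 < d.Klam) (hρ : 0 < d.ρ) (hσ : 0 < d.σ)
    (xb : St n) (hxb : Fvec d xb = 0)
    (hsec : ∀ k, (Emat d).mulVec (phiOf xb) k ∈ Set.Ioo (-(Real.pi / 2)) (Real.pi / 2))
    (T : ℝ) (hT : 0 ≤ T) (x : ℝ → St n)
    (hx : ∀ t ∈ Set.Icc (0 : ℝ) T, HasDerivAt x (Fvec d (x t)) t) :
    (∀ t ∈ Set.Icc (0 : ℝ) T,
      HasDerivAt (fun s => Vfun d xb (x s))
        (-(∑ i, d.A i * (omgOf (x t) i) ^ 2)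
          - (1 / d.σ ^ 2) * ∑ i, (d.Q i)⁻¹ * (bidOf (x t) i - bidOf xb i) ^ 2
          - (d.ρ / d.σ ^ 2) * (∑ i, (pgOf (x t) i - pgOf xb i)) ^ 2) t) ∧
    AntitoneOn (fun t => Vfun d xb (x t)) (Set.Icc 0 T) := by
  classical
  have hσ2 : d.σ ^ 2 ≠ 0 := pow_ne_zero 2 hσ.ne'
  -- coordinatewise equilibrium equations
  have h0 : ∀ idx, Fvec d xb idx = 0 := fun idx => by simp [hxb]
  have hE1 : ∀ i, d.Dtᵀ.mulVec (omgOf xb) i = 0 := fun i => h0 (Sum.inl i)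
  have cancel : ∀ (a z : ℝ), a ≠ 0 → a⁻¹ * z = 0 → z = 0 := by
    intro a z ha h
    rcases mul_eq_zero.mp h with h | h
    · exact absurd h (inv_ne_zero ha)
    · exact h
  have hE2 : ∀ i, -(d.Dt.mulVec (gradU d (phiOf xb))) i - d.A i * omgOf xb i
      + pgOf xb i - d.Pd i = 0 :=
    fun i => cancel _ _ (hM i).ne' (h0 (Sum.inr (Sum.inl i)))
  have hE3 : ∀ i, pgOf xb i - (d.Q i)⁻¹ * bidOf xb i + (d.Q i)⁻¹ * d.c i = 0 :=
    fun i => cancel _ _ (hKb i).ne' (h0 (Sum.inr (Sum.inr (Sum.inl i))))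
  have hE4 : ∀ i, lamOf xb - bidOf xb i + d.ρ * (∑ j, (d.Pd j - pgOf xb j))
      - d.σ ^ 2 * omgOf xb i = 0 :=
    fun i => cancel _ _ (hKg i).ne' (h0 (Sum.inr (Sum.inr (Sum.inr (Sum.inl i)))))
  have hE5 : ∑ j, (d.Pd j - pgOf xb j) = 0 :=
    cancel _ _ hKlam.ne' (h0 (Sum.inr (Sum.inr (Sum.inr (Sum.inr 0)))))
  -- the equilibrium frequency deviation vanishes
  have hDtsum : ∀ g : Fin (n - 1) → ℝ, ∑ i, d.Dt.mulVec g i = 0 := by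
    intro g
    simp only [Matrix.mulVec, dotProduct]
    rw [Finset.sum_comm]
    refine Finset.sum_eq_zero fun j _ => ?_
    have h1 := congrFun hDt1 j
    simp only [Matrix.vecMul, dotProduct, one_mul, Pi.zero_apply] at h1
    rw [← Finset.sum_mul, h1, zero_mul]
  have hωb : ∀ i, omgOf xb i = 0 := by
    have hones_mem : (fun _ => (1 : ℝ)) ∈ LinearMap.ker d.Dtᵀ.mulVecLin := by
      rw [LinearMap.mem_ker, Matrix.mulVecLin_apply, Matrix.mulVec_transpose, hDt1]
    have hω_mem : omgOf xb ∈ LinearMap.ker d.Dtᵀ.mulVecLin := by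
      rw [LinearMap.mem_ker, Matrix.mulVecLin_apply]
      exact funext hE1
    have hkerrank : Module.finrank ℝ (LinearMap.ker d.Dtᵀ.mulVecLin) = 1 := by
      have hr : Module.finrank ℝ (LinearMap.range d.Dtᵀ.mulVecLin) = n - 1 := by
        have := Matrix.rank_transpose d.Dt
        rw [hDtrank] at this
        exact this
      have h2 := LinearMap.finrank_range_add_finrank_ker d.Dtᵀ.mulVecLin
      rw [Module.finrank_fin_fun, hr] at h2
      omega
    have hones0 : (fun _ => (1 : ℝ)) ≠ (0 : Fin n → ℝ) := by
      intro h
      have := congrFun h ⟨0, by omega⟩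
      simpa using this
    have hspan : Submodule.span ℝ {(fun _ => (1 : ℝ) : Fin n → ℝ)}
        = LinearMap.ker d.Dtᵀ.mulVecLin := by
      apply Submodule.eq_of_le_of_finrank_le
        ((Submodule.span_le).mpr (by simpa using hones_mem))
      rw [hkerrank, finrank_span_singleton hones0]
    obtain ⟨α, hα⟩ := Submodule.mem_span_singleton.mp (hspan ▸ hω_mem)
    have hsumA : ∑ i, d.A i * omgOf xb i = 0 := by
      have h2 : ∑ i, (-(d.Dt.mulVec (gradU d (phiOf xb))) i - d.A i * omgOf xb i
          + pgOf xb i - d.Pd i) = 0 := Finset.sum_eq_zero fun i _ => hE2 i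
      have h3 := hDtsum (gradU d (phiOf xb))
      have hsplit : ∑ i, (-(d.Dt.mulVec (gradU d (phiOf xb))) i - d.A i * omgOf xb i
          + pgOf xb i - d.Pd i)
          = ∑ i, (-(d.Dt.mulVec (gradU d (phiOf xb)) i) + -(d.A i * omgOf xb i)
            + -(d.Pd i - pgOf xb i)) :=
        Finset.sum_congr rfl fun i _ => by ring
      rw [hsplit, Finset.sum_add_distrib, Finset.sum_add_distrib, Finset.sum_neg_distrib,
        Finset.sum_neg_distrib, Finset.sum_neg_distrib, h3, hE5] at h2
      linarith
    have hαz : α = 0 := by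
      have hs : ∑ i, d.A i * omgOf xb i = α * ∑ i, d.A i := by
        rw [Finset.mul_sum]
        refine Finset.sum_congr rfl fun i _ => ?_
        rw [← hα]
        simp [Pi.smul_apply]
        ring
      have hpos : 0 < ∑ i, d.A i := by
        have : Nonempty (Fin n) := ⟨⟨0, by omega⟩⟩
        exact Finset.sum_pos (fun i _ => hA i) Finset.univ_nonempty
      rw [hsumA] at hs
      rcases mul_eq_zero.mp hs.symm with h | h
      · exact h
      · exact absurd h hpos.ne'
    intro i
    rw [← hα, hαz]
    simp
  -- consequences of the equilibrium equations
  have hblam : ∀ i, bidOf xb i = lamOf xb := by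
    intro i
    have h := hE4 i
    rw [hE5, hωb i] at h
    simp only [mul_zero, add_zero, sub_zero] at h
    linarith
  have hDtg : ∀ i, d.Dt.mulVec (gradU d (phiOf xb)) i = pgOf xb i - d.Pd i := by
    intro i
    have h := hE2 i
    rw [hωb i] at h
    simp only [mul_zero, sub_zero] at h
    linarith
  have hQc : ∀ i, (d.Q i)⁻¹ * d.c i = (d.Q i)⁻¹ * bidOf xb i - pgOf xb i := by
    intro i
    have h := hE3 i
    linarith
  -- the key derivative computation
  have key : ∀ t ∈ Set.Icc (0 : ℝ) T,
      HasDerivAt (fun s => Vfun d xb (x s))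
        (-(∑ i, d.A i * (omgOf (x t) i) ^ 2)
          - (1 / d.σ ^ 2) * ∑ i, (d.Q i)⁻¹ * (bidOf (x t) i - bidOf xb i) ^ 2
          - (d.ρ / d.σ ^ 2) * (∑ i, (pgOf (x t) i - pgOf xb i)) ^ 2) t := by
    intro t ht
    have hc : ∀ idx, HasDerivAt (fun s => x s idx) (Fvec d (x t) idx) t := by
      intro idx
      have := (EuclideanSpace.proj (𝕜 := ℝ) idx).hasFDerivAt.comp_hasDerivAt t (hx t ht)
      exact this
    have hφ : ∀ i, HasDerivAt (fun s => phiOf (x s) i)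
        (d.Dtᵀ.mulVec (omgOf (x t)) i) t := fun i => hc (Sum.inl i)
    have hω : ∀ i, HasDerivAt (fun s => omgOf (x s) i)
        ((d.M i)⁻¹ * (-(d.Dt.mulVec (gradU d (phiOf (x t)))) i - d.A i * omgOf (x t) i
          + pgOf (x t) i - d.Pd i)) t := fun i => hc (Sum.inr (Sum.inl i))
    have hb : ∀ i, HasDerivAt (fun s => bidOf (x s) i)
        ((d.Kb i)⁻¹ * (pgOf (x t) i - (d.Q i)⁻¹ * bidOf (x t) i + (d.Q i)⁻¹ * d.c i)) t :=
      fun i => hc (Sum.inr (Sum.inr (Sum.inl i)))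
    have hp : ∀ i, HasDerivAt (fun s => pgOf (x s) i)
        ((d.Kg i)⁻¹ * (lamOf (x t) - bidOf (x t) i + d.ρ * (∑ j, (d.Pd j - pgOf (x t) j))
          - d.σ ^ 2 * omgOf (x t) i)) t :=
      fun i => hc (Sum.inr (Sum.inr (Sum.inr (Sum.inl i))))
    have hlam : HasDerivAt (fun s => lamOf (x s))
        (d.Klam⁻¹ * ∑ j, (d.Pd j - pgOf (x t) j)) t :=
      hc (Sum.inr (Sum.inr (Sum.inr (Sum.inr 0))))
    -- derivative of each piece of V
    have hu : ∀ k, HasDerivAt (fun s => (Emat d).mulVec (phiOf (x s)) k)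
        (∑ i, Emat d k i * d.Dtᵀ.mulVec (omgOf (x t)) i) t := by
      intro k
      have hrw : (fun s => (Emat d).mulVec (phiOf (x s)) k)
          = fun s => ∑ i, Emat d k i * phiOf (x s) i := by
        funext s
        simp [Matrix.mulVec, dotProduct]
      rw [hrw]
      exact HasDerivAt.fun_sum fun i _ => (hφ i).const_mul _
    have hU : HasDerivAt (fun s => Upot d (phiOf (x s)))
        (∑ i, d.Dtᵀ.mulVec (omgOf (x t)) i * gradU d (phiOf (x t)) i) t := by
      have hraw : HasDerivAt (fun s => Upot d (phiOf (x s)))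
          (-∑ k, d.γ k * (-Real.sin ((Emat d).mulVec (phiOf (x t)) k)
            * ∑ i, Emat d k i * d.Dtᵀ.mulVec (omgOf (x t)) i)) t := by
        have hrw : (fun s => Upot d (phiOf (x s)))
            = fun s => -∑ k, d.γ k * Real.cos ((Emat d).mulVec (phiOf (x s)) k) := rfl
        rw [hrw]
        exact (HasDerivAt.fun_sum fun k _ => ((hu k).cos.const_mul (d.γ k))).fun_neg
      convert hraw using 1
      simp only [mul_neg, neg_mul, Finset.sum_neg_distrib, neg_neg]
      simp only [gradU, Matrix.mulVec, dotProduct, Matrix.transpose_apply,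
        Finset.mul_sum]
      rw [Finset.sum_comm]
      refine Finset.sum_congr rfl fun k _ => Finset.sum_congr rfl fun i _ => ?_
      simp only [Finset.sum_mul]
      exact Finset.sum_congr rfl fun l _ => by ring
    have hS1 : HasDerivAt (fun s => ∑ i, (phiOf (x s) i - phiOf xb i) * gradU d (phiOf xb) i)
        (∑ i, d.Dtᵀ.mulVec (omgOf (x t)) i * gradU d (phiOf xb) i) t :=
      HasDerivAt.fun_sum fun i _ => ((hφ i).sub_const _).mul_const _
    have hT3 : HasDerivAt (fun s => (1 / 2) * ∑ i, d.M i * (omgOf (x s) i) ^ 2)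
        (∑ i, omgOf (x t) i * (-(d.Dt.mulVec (gradU d (phiOf (x t)))) i
          - d.A i * omgOf (x t) i + pgOf (x t) i - d.Pd i)) t := by
      have hraw := (HasDerivAt.fun_sum (u := Finset.univ)
        fun i (_ : i ∈ Finset.univ) => ((hω i).fun_pow 2).const_mul (d.M i)).const_mul (1 / 2 : ℝ)
      refine hraw.congr_deriv (Eq.symm ?_)
      rw [Finset.mul_sum]
      refine Finset.sum_congr rfl fun i _ => ?_
      have hMi : d.M i ≠ 0 := (hM i).ne'
      field_simp <;> ring
    have hT4 : HasDerivAt (fun s => ∑ i, d.Kb i * (bidOf (x s) i - bidOf xb i) ^ 2)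
        (∑ i, 2 * (bidOf (x t) i - bidOf xb i)
          * (pgOf (x t) i - (d.Q i)⁻¹ * bidOf (x t) i + (d.Q i)⁻¹ * d.c i)) t := by
      have hraw := HasDerivAt.fun_sum (u := Finset.univ)
        fun i (_ : i ∈ Finset.univ) => (((hb i).sub_const (bidOf xb i)).fun_pow 2).const_mul (d.Kb i)
      refine hraw.congr_deriv (Eq.symm ?_)
      refine Finset.sum_congr rfl fun i _ => ?_
      have hKbi : d.Kb i ≠ 0 := (hKb i).ne'
      field_simp <;> ring
    have hT5 : HasDerivAt (fun s => ∑ i, d.Kg i * (pgOf (x s) i - pgOf xb i) ^ 2)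
        (∑ i, 2 * (pgOf (x t) i - pgOf xb i)
          * (lamOf (x t) - bidOf (x t) i + d.ρ * (∑ j, (d.Pd j - pgOf (x t) j))
            - d.σ ^ 2 * omgOf (x t) i)) t := by
      have hraw := HasDerivAt.fun_sum (u := Finset.univ)
        fun i (_ : i ∈ Finset.univ) => (((hp i).sub_const (pgOf xb i)).fun_pow 2).const_mul (d.Kg i)
      refine hraw.congr_deriv (Eq.symm ?_)
      refine Finset.sum_congr rfl fun i _ => ?_
      have hKgi : d.Kg i ≠ 0 := (hKg i).ne'
      field_simp <;> ring
    have hT6 : HasDerivAt (fun s => d.Klam * (lamOf (x s) - lamOf xb) ^ 2)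
        (2 * (lamOf (x t) - lamOf xb) * ∑ j, (d.Pd j - pgOf (x t) j)) t := by
      have hraw := ((hlam.sub_const (lamOf xb)).fun_pow 2).const_mul d.Klam
      refine hraw.congr_deriv (Eq.symm ?_)
      have hKl : d.Klam ≠ 0 := hKlam.ne'
      field_simp <;> ring
    have hVraw := ((((hU.sub hS1).sub_const (Upot d (phiOf xb))).add hT3).add
      (((hT4.add hT5).add hT6).const_mul (1 / (2 * d.σ ^ 2))))
    have hBIG :
        (∑ i, d.Dtᵀ.mulVec (omgOf (x t)) i * gradU d (phiOf (x t)) i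
            - ∑ i, d.Dtᵀ.mulVec (omgOf (x t)) i * gradU d (phiOf xb) i
          + ∑ i, omgOf (x t) i * (-(d.Dt.mulVec (gradU d (phiOf (x t)))) i
              - d.A i * omgOf (x t) i + pgOf (x t) i - d.Pd i))
        + (1 / (2 * d.σ ^ 2)) *
            ((∑ i, 2 * (bidOf (x t) i - bidOf xb i)
                * (pgOf (x t) i - (d.Q i)⁻¹ * bidOf (x t) i + (d.Q i)⁻¹ * d.c i)
              + ∑ i, 2 * (pgOf (x t) i - pgOf xb i)
                * (lamOf (x t) - bidOf (x t) i + d.ρ * (∑ j, (d.Pd j - pgOf (x t) j))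
                  - d.σ ^ 2 * omgOf (x t) i))
            + 2 * (lamOf (x t) - lamOf xb) * ∑ j, (d.Pd j - pgOf (x t) j))
        = -(∑ i, d.A i * (omgOf (x t) i) ^ 2)
          - (1 / d.σ ^ 2) * ∑ i, (d.Q i)⁻¹ * (bidOf (x t) i - bidOf xb i) ^ 2
          - (d.ρ / d.σ ^ 2) * (∑ i, (pgOf (x t) i - pgOf xb i)) ^ 2 := by
      have hPdsum : ∑ j, (d.Pd j - pgOf (x t) j)
          = -∑ j, (pgOf (x t) j - pgOf xb j) := by
        have hsplit : ∑ j, (d.Pd j - pgOf (x t) j)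
            = ∑ j, (d.Pd j - pgOf xb j) - ∑ j, (pgOf (x t) j - pgOf xb j) := by
          rw [← Finset.sum_sub_distrib]
          exact Finset.sum_congr rfl fun j _ => by ring
        rw [hsplit, hE5, zero_sub]
      have grpA : ∑ i, d.Dtᵀ.mulVec (omgOf (x t)) i * gradU d (phiOf (x t)) i
            - ∑ i, d.Dtᵀ.mulVec (omgOf (x t)) i * gradU d (phiOf xb) i
          + ∑ i, omgOf (x t) i * (-(d.Dt.mulVec (gradU d (phiOf (x t)))) i
              - d.A i * omgOf (x t) i + pgOf (x t) i - d.Pd i)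
          = -(∑ i, d.A i * (omgOf (x t) i) ^ 2)
            + ∑ i, omgOf (x t) i * (pgOf (x t) i - pgOf xb i) := by
        rw [sum_swap_Dt d (omgOf (x t)) (gradU d (phiOf (x t))),
          sum_swap_Dt d (omgOf (x t)) (gradU d (phiOf xb)),
          ← Finset.sum_neg_distrib, ← Finset.sum_sub_distrib, ← Finset.sum_add_distrib,
          ← Finset.sum_add_distrib]
        refine Finset.sum_congr rfl fun i _ => ?_
        rw [hDtg i]
        ring
      have grpB : ∑ i, 2 * (bidOf (x t) i - bidOf xb i)
            * (pgOf (x t) i - (d.Q i)⁻¹ * bidOf (x t) i + (d.Q i)⁻¹ * d.c i)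
          = 2 * (∑ i, (bidOf (x t) i - bidOf xb i) * (pgOf (x t) i - pgOf xb i))
            - 2 * (∑ i, (d.Q i)⁻¹ * (bidOf (x t) i - bidOf xb i) ^ 2) := by
        rw [Finset.mul_sum, Finset.mul_sum, ← Finset.sum_sub_distrib]
        refine Finset.sum_congr rfl fun i _ => ?_
        rw [hQc i]
        ring
      have grpC : ∑ i, 2 * (pgOf (x t) i - pgOf xb i)
            * (lamOf (x t) - bidOf (x t) i + d.ρ * (∑ j, (d.Pd j - pgOf (x t) j))
              - d.σ ^ 2 * omgOf (x t) i)
          = 2 * (lamOf (x t) - lamOf xb) * (∑ i, (pgOf (x t) i - pgOf xb i))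
            - 2 * (∑ i, (bidOf (x t) i - bidOf xb i) * (pgOf (x t) i - pgOf xb i))
            - 2 * d.ρ * ((∑ i, (pgOf (x t) i - pgOf xb i))
                * (∑ i, (pgOf (x t) i - pgOf xb i)))
            - 2 * d.σ ^ 2 * (∑ i, omgOf (x t) i * (pgOf (x t) i - pgOf xb i)) := by
        rw [hPdsum]
        have step : ∀ i ∈ Finset.univ, 2 * (pgOf (x t) i - pgOf xb i)
            * (lamOf (x t) - bidOf (x t) i
              + d.ρ * (-∑ j, (pgOf (x t) j - pgOf xb j)) - d.σ ^ 2 * omgOf (x t) i)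
            = (2 * (lamOf (x t) - lamOf xb)) * (pgOf (x t) i - pgOf xb i)
              + -(2 * ((bidOf (x t) i - bidOf xb i) * (pgOf (x t) i - pgOf xb i)))
              + -((2 * d.ρ) * ((pgOf (x t) i - pgOf xb i)
                  * (∑ j, (pgOf (x t) j - pgOf xb j))))
              + -((2 * d.σ ^ 2) * (omgOf (x t) i * (pgOf (x t) i - pgOf xb i))) := by
          intro i _
          rw [← hblam i]
          ring
        rw [Finset.sum_congr rfl step, Finset.sum_add_distrib, Finset.sum_add_distrib,
          Finset.sum_add_distrib, Finset.sum_neg_distrib, Finset.sum_neg_distrib,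
          Finset.sum_neg_distrib, ← Finset.mul_sum, ← Finset.mul_sum, ← Finset.mul_sum,
          ← Finset.mul_sum, ← Finset.sum_mul]
        ring
      have grpD : 2 * (lamOf (x t) - lamOf xb) * ∑ j, (d.Pd j - pgOf (x t) j)
          = -(2 * (lamOf (x t) - lamOf xb) * (∑ i, (pgOf (x t) i - pgOf xb i))) := by
        rw [hPdsum]
        ring
      rw [grpA, grpB, grpC, grpD]
      field_simp
      ring
    exact hBIG ▸ hVraw
  refine ⟨key, ?_⟩
  have hcont : ContinuousOn (fun s => Vfun d xb (x s)) (Set.Icc 0 T) :=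
    fun s hs => ((key s hs).continuousAt).continuousWithinAt
  refine antitoneOn_of_deriv_nonpos (convex_Icc 0 T) hcont ?_ ?_
  · intro s hs
    rw [interior_Icc] at hs
    exact (key s ⟨hs.1.le, hs.2.le⟩).differentiableAt.differentiableWithinAt
  · intro s hs
    rw [interior_Icc] at hs
    have hs' : s ∈ Set.Icc (0 : ℝ) T := ⟨hs.1.le, hs.2.le⟩
    rw [(key s hs').deriv]
    have h1 : 0 ≤ ∑ i, d.A i * (omgOf (x s) i) ^ 2 :=
      Finset.sum_nonneg fun i _ => mul_nonneg (hA i).le (sq_nonneg _)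
    have h2 : 0 ≤ (1 / d.σ ^ 2) * ∑ i, (d.Q i)⁻¹ * (bidOf (x s) i - bidOf xb i) ^ 2 :=
      mul_nonneg (by positivity)
        (Finset.sum_nonneg fun i _ => mul_nonneg (inv_nonneg.mpr (hQ i).le) (sq_nonneg _))
    have h3 : 0 ≤ (d.ρ / d.σ ^ 2) * (∑ i, (pgOf (x s) i - pgOf xb i)) ^ 2 :=
      mul_nonneg (by positivity) (sq_nonneg _)
    linarith
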